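/- arXiv:1206.6632 — 4 statements merged into one kernel-verified Lean document; each statement's English description precedes it below -/
import Mathlib

section
/- Let f : A → B be a homomorphism of (associative, unital) rings and let I be an injective left A-module. Then J := Hom_A(B, I), equipped with the left B-module structure (b·φ)(b') = φ(b'b), is an injective left B-module. -/
/-!
If `f : A →+* B` is a ring homomorphism and `I` is an injective left `A`-module,
then `J := Hom_A(B, I)`, with the left `B`-module structure `(b • φ) b' = φ (b' * b)`,
is an injective left `B`-module. In Mathlib, this `B`-module is
`(ModuleCat.coextendScalars f).obj I`.
-/
theorem stmt_0 {A B : Type} [Ring A] [Ring B] (f : A →+* B)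
    (I : ModuleCat A) (hI : CategoryTheory.Injective I) :
    CategoryTheory.Injective ((ModuleCat.coextendScalars f).obj I) := by
  have := hI
  exact CategoryTheory.Injective.injective_of_adjoint
    (ModuleCat.restrictCoextendScalarsAdj f) I
end

section
/- Let M be an abelian category, I a K-injective complex, and φ : I → M' a quasi-isomorphism in the homotopy category K(M). Then φ is a split monomorphism in K(M): there exists a morphism ψ : M' → I in K(M) such that ψ ∘ φ = 1_I. -/
open CategoryTheory Limits

/-- A cochain complex `I` in an abelian category is K-injective if the Hom complex
`Hom•(N, I)` is acyclic for every acyclic complex `N`. -/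
def IsKInjective {M : Type u} [Category.{v} M] [Abelian M] (I : CochainComplex M ℤ) : Prop :=
  ∀ N : CochainComplex M ℤ, (∀ n : ℤ, N.ExactAt n) →
    ∀ n : ℤ, (CochainComplex.HomComplex N I).ExactAt n

/-!
If `I` is a K-injective complex and `φ : I ⟶ M'` is a quasi-isomorphism in the homotopy
category `K(M)`, then `φ` is a split monomorphism: there is `ψ : M' ⟶ I` in `K(M)` with
`φ ≫ ψ = 𝟙 I`.
-/
theorem stmt_10 {M : Type u} [Category.{v} M] [Abelian M]
    (I M' : CochainComplex M ℤ) (hI : IsKInjective I)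
    (φ : (HomotopyCategory.quotient M (ComplexShape.up ℤ)).obj I ⟶
        (HomotopyCategory.quotient M (ComplexShape.up ℤ)).obj M')
    (hφ : ∀ n : ℤ,
      IsIso ((HomotopyCategory.homologyFunctor M (ComplexShape.up ℤ) n).map φ)) :
    ∃ ψ : (HomotopyCategory.quotient M (ComplexShape.up ℤ)).obj M' ⟶
        (HomotopyCategory.quotient M (ComplexShape.up ℤ)).obj I,
      φ ≫ ψ = 𝟙 _ := by
  -- choose a chain-map representative `f` of `φ`
  obtain ⟨f, rfl⟩ := (HomotopyCategory.quotient M (ComplexShape.up ℤ)).map_surjective φ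
  -- the mapping cone of `f` is acyclic
  set C := CochainComplex.mappingCone f with hC
  have hW : (HomotopyCategory.subcategoryAcyclic M).trW
      ((HomotopyCategory.quotient M (ComplexShape.up ℤ)).map f) := by
    rw [← HomotopyCategory.quasiIso_eq_trW_subcategoryAcyclic]
    exact hφ
  have hacyclic : ∀ n : ℤ, C.ExactAt n := by
    rw [← HomotopyCategory.quotient_obj_mem_subcategoryAcyclic_iff_exactAt]
    exact ((HomotopyCategory.subcategoryAcyclic M).trW_iff_of_distinguished
      (CochainComplex.mappingCone.triangleh f)
      (HomotopyCategory.mappingCone_triangleh_distinguished f)).1 hW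
  -- exactness of the Hom complex at degree 1
  have hE := hI C hacyclic 1
  rw [HomologicalComplex.exactAt_iff' _ 0 1 2 (by simp) (by simp)] at hE
  rw [ShortComplex.ab_exact_iff] at hE
  -- split the cocycle `-fst`
  obtain ⟨β, hβ⟩ := hE (-(CochainComplex.mappingCone.fst f).1) (by
    change CochainComplex.HomComplex.δ 1 2 _ = 0
    simp)
  replace hβ : CochainComplex.HomComplex.δ 0 1 β =
      -(CochainComplex.mappingCone.fst f).1 := hβ
  change CochainComplex.HomComplex.Cochain (CochainComplex.mappingCone f) I 0 at β
  -- the candidate retraction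
  set z : CochainComplex.HomComplex.Cochain M' I 0 :=
    (CochainComplex.HomComplex.Cochain.ofHom (CochainComplex.mappingCone.inr f)).comp β
      (zero_add 0) with hz
  have hzc : CochainComplex.HomComplex.δ 0 1 z = 0 := by
    rw [hz, CochainComplex.HomComplex.δ_ofHom_comp, hβ]
    simp
  set ψ : M' ⟶ I := CochainComplex.HomComplex.Cocycle.homOf
    (CochainComplex.HomComplex.Cocycle.mk z 1 (zero_add 1) hzc) with hψ
  -- the homotopy `f ≫ ψ ∼ 𝟙 I`
  have key : CochainComplex.HomComplex.Cochain.ofHom (f ≫ ψ) =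
      CochainComplex.HomComplex.δ (-1) 0
        ((CochainComplex.mappingCone.inl f).comp β (add_zero (-1))) +
      CochainComplex.HomComplex.Cochain.ofHom (𝟙 I) := by
    rw [CochainComplex.HomComplex.δ_comp _ _ (add_zero (-1)) 0 1 0 (by omega) (by omega)
      (by omega), hβ, CochainComplex.mappingCone.δ_inl]
    simp only [CochainComplex.HomComplex.Cochain.comp_neg,
      CochainComplex.mappingCone.inl_fst, Int.negOnePow_zero, one_smul]
    have hψz : CochainComplex.HomComplex.Cochain.ofHom ψ = z := by
      rw [hψ]
      simpa using CochainComplex.HomComplex.Cocycle.cochain_ofHom_homOf_eq_coe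
        (CochainComplex.HomComplex.Cocycle.mk z 1 (zero_add 1) hzc)
    rw [CochainComplex.HomComplex.Cochain.ofHom_comp f ψ, hψz, hz,
      CochainComplex.HomComplex.Cochain.ofHom_comp f (CochainComplex.mappingCone.inr f),
      CochainComplex.HomComplex.Cochain.comp_assoc_of_first_is_zero_cochain]
    abel
  have h : Homotopy (f ≫ ψ) (𝟙 I) :=
    (CochainComplex.HomComplex.Cochain.equivHomotopy _ _).symm
      ⟨(CochainComplex.mappingCone.inl f).comp β (add_zero (-1)), key⟩
  refine ⟨(HomotopyCategory.quotient M (ComplexShape.up ℤ)).map ψ, ?_⟩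
  rw [← Functor.map_comp, HomotopyCategory.eq_of_homotopy _ _ h]
  exact (HomotopyCategory.quotient M (ComplexShape.up ℤ)).map_id I
end

section
/- Let M be an abelian category, I a K-injective complex, and M' any complex. Then the localization functor Q : K(M) → D(M) induces a bijection Hom_{K(M)}(M', I) → Hom_{D(M)}(M', I). Consequently, the restriction of Q to the full subcategory of K(M) on the K-injective complexes is fully faithful. -/
open CategoryTheory Limits

section Aux

open CochainComplex HomComplex Pretriangulated

variable {M : Type u} [Category.{v} M] [Abelian M]

/-- Any map in the homotopy category from an acyclic complex to a K-injective complex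
vanishes. -/
lemma hom_eq_zero_of_acyclic (I : CochainComplex M ℤ) (hI : _root_.IsKInjective I)
    (X : HomotopyCategory M (ComplexShape.up ℤ))
    (hX : (HomotopyCategory.subcategoryAcyclic M) X)
    (φ : X ⟶ (HomotopyCategory.quotient M (ComplexShape.up ℤ)).obj I) : φ = 0 := by
  obtain ⟨K, rfl⟩ : ∃ Y, (HomotopyCategory.quotient M (ComplexShape.up ℤ)).obj Y = X :=
    ⟨X.as, rfl⟩
  obtain ⟨g, rfl⟩ := (HomotopyCategory.quotient M (ComplexShape.up ℤ)).map_surjective φ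
  replace hX := (HomotopyCategory.quotient_obj_mem_subcategoryAcyclic_iff_exactAt K).1 hX
  have h0 := hI K hX 0
  rw [HomologicalComplex.exactAt_iff' _ (-1) 0 1 (by simp) (by simp),
    ShortComplex.ab_exact_iff] at h0
  obtain ⟨y, hy⟩ := h0 (Cochain.ofHom g) (by exact δ_ofHom g)
  have ho : Homotopy g 0 :=
    (Cochain.equivHomotopy g 0).symm ⟨y, by rw [← hy]; simp; rfl⟩
  rw [HomotopyCategory.eq_of_homotopy g 0 ho, Functor.map_zero]

/-- A quasi-isomorphism out of a K-injective complex admits a retraction in the homotopy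
category. -/
lemma exists_retraction (I : CochainComplex M ℤ) (hI : _root_.IsKInjective I)
    {Z : HomotopyCategory M (ComplexShape.up ℤ)}
    (s : (HomotopyCategory.quotient M (ComplexShape.up ℤ)).obj I ⟶ Z)
    (hs : (HomotopyCategory.subcategoryAcyclic M).trW s) :
    ∃ r : Z ⟶ (HomotopyCategory.quotient M (ComplexShape.up ℤ)).obj I,
      s ≫ r = 𝟙 _ := by
  obtain ⟨C, g, h, hT, hC⟩ := hs
  obtain ⟨r, hr⟩ := Triangle.yoneda_exact₂ _
    (inv_rot_of_distTriang _ hT) (𝟙 _) (by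
      rw [Category.comp_id]
      exact hom_eq_zero_of_acyclic I hI _
        ((HomotopyCategory.subcategoryAcyclic M).le_shift (-1) C hC) _)
  exact ⟨r, hr.symm⟩

end Aux

/-!
If `I` is a K-injective complex, then for every complex `M'` the localization functor
`Q : K(M) ⥤ D(M)` induces a bijection
`Hom_{K(M)}(M', I) ≃ Hom_{D(M)}(M', I)`.
(Consequently the restriction of `Q` to the K-injective complexes is fully faithful.)
-/
theorem stmt_11 {M : Type u} [Category.{v} M] [Abelian M] [HasDerivedCategory.{w} M]
    (I : CochainComplex M ℤ) (hI : IsKInjective I) (M' : CochainComplex M ℤ) :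
    Function.Bijective
      (fun f : (HomotopyCategory.quotient M (ComplexShape.up ℤ)).obj M' ⟶
          (HomotopyCategory.quotient M (ComplexShape.up ℤ)).obj I =>
        DerivedCategory.Qh.map f) := by
  set L := (DerivedCategory.Qh (C := M))
  set W := (HomotopyCategory.subcategoryAcyclic M).trW
  constructor
  · intro f₁ f₂ hf
    rw [MorphismProperty.map_eq_iff_postcomp L W] at hf
    obtain ⟨Z, s, hs, fac⟩ := hf
    obtain ⟨r, hr⟩ := exists_retraction I hI s hs
    have := fac =≫ r
    simpa only [Category.assoc, hr, Category.comp_id] using this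
  · intro f
    obtain ⟨φ, hφ⟩ := Localization.exists_leftFraction L W f
    obtain ⟨r, hr⟩ := exists_retraction I hI φ.s φ.hs
    refine ⟨φ.f ≫ r, ?_⟩
    have h1 : f ≫ L.map φ.s = L.map φ.f := by
      rw [hφ]
      exact φ.map_comp_map_s L (Localization.inverts L W)
    have : IsIso (L.map φ.s) := Localization.inverts L W _ φ.hs
    have h2 : L.map φ.s ≫ L.map r = 𝟙 _ := by
      rw [← L.map_comp, hr, L.map_id]
    simp only [L.map_comp]
    rw [← h1, Category.assoc, h2, Category.comp_id]
end

section
/- Let A be a ring and M a bounded above cochain complex of left A-modules. Then there exists a quasi-isomorphism P → M where P is a bounded above complex of free A-modules. If moreover A is left noetherian and every cohomology module H^i(M) is finitely generated, then P can be chosen so that each P^i is a finitely generated free A-module. -/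
open CategoryTheory Limits

universe v


lemma moduleCat_quasiIso {A : Type} [Ring A] {S₁ S₂ : ShortComplex (ModuleCat A)} (φ : S₁ ⟶ S₂)
    (hinj : ∀ z : S₁.X₂, S₁.g z = 0 → (∃ w, φ.τ₂ z = S₂.f w) → ∃ y, S₁.f y = z)
    (hsurj : ∀ z : S₂.X₂, S₂.g z = 0 →
      ∃ (x : S₁.X₂) (w : S₂.X₁), S₁.g x = 0 ∧ φ.τ₂ x = z + S₂.f w) :
    ShortComplex.QuasiIso φ := by
  rw [ShortComplex.quasiIso_iff]
  have comm23 : ∀ x : S₁.X₂, S₂.g (φ.τ₂ x) = φ.τ₃ (S₁.g x) := fun x =>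
    congrArg (fun (f : S₁.X₂ ⟶ S₂.X₃) => f x) φ.comm₂₃
  have comm12 : ∀ y : S₁.X₁, φ.τ₂ (S₁.f y) = S₂.f (φ.τ₁ y) := fun y =>
    (congrArg (fun (f : S₁.X₁ ⟶ S₂.X₂) => f y) φ.comm₁₂).symm
  have hker : ∀ x ∈ LinearMap.ker S₁.g.hom, φ.τ₂ x ∈ LinearMap.ker S₂.g.hom := by
    intro x hx
    simp only [LinearMap.mem_ker] at hx ⊢
    rw [comm23, hx, map_zero]
  let φK : (ModuleCat.of A (LinearMap.ker S₁.g.hom)) ⟶ (ModuleCat.of A (LinearMap.ker S₂.g.hom)) :=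
    ModuleCat.ofHom ((φ.τ₂.hom : S₁.X₂ →ₗ[A] S₂.X₂).restrict hker)
  have hφK : ∀ x : LinearMap.ker S₁.g.hom,
      (show LinearMap.ker S₂.g.hom from φK x).val = φ.τ₂ x.val := fun _ => rfl
  have hmapsto : ∀ y, φK (S₁.moduleCatToCycles y) = S₂.moduleCatToCycles (φ.τ₁ y) := by
    intro y
    apply Subtype.ext
    rw [hφK]
    exact comm12 y
  have hsub : LinearMap.range S₁.moduleCatToCycles ≤
      (LinearMap.range S₂.moduleCatToCycles).comap φK.hom := by
    rintro x ⟨y, rfl⟩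
    exact ⟨φ.τ₁ y, (hmapsto y).symm⟩
  let φH : S₁.moduleCatLeftHomologyData.H ⟶ S₂.moduleCatLeftHomologyData.H :=
    ModuleCat.ofHom (Submodule.mapQ _ _ φK.hom hsub)
  have hφH : ∀ q, φH (Submodule.Quotient.mk q) = Submodule.Quotient.mk (φK q) :=
    fun q => Submodule.mapQ_apply _ _ _ (h := hsub) q
  let γ : ShortComplex.LeftHomologyMapData φ S₁.moduleCatLeftHomologyData
      S₂.moduleCatLeftHomologyData :=
    ⟨φK, φH, by rfl, by exact ModuleCat.hom_ext (LinearMap.ext fun y => hmapsto y), by rfl⟩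
  rw [γ.homologyMap_eq]
  have hbij : Function.Bijective φH := by
    constructor
    · intro a b hab
      obtain ⟨⟨x, hx⟩, rfl⟩ := Submodule.mkQ_surjective _ a
      obtain ⟨⟨x', hx'⟩, rfl⟩ := Submodule.mkQ_surjective _ b
      simp only [Submodule.mkQ_apply] at hab ⊢
      rw [hφH, hφH] at hab
      apply (Submodule.Quotient.eq _).mpr
      obtain ⟨w, hw⟩ := (Submodule.Quotient.eq _).mp hab
      have hw2 := congrArg Subtype.val hw
      simp only [AddSubgroupClass.coe_sub] at hw2
      have hw' : φ.τ₂ (x - x') = S₂.f w := by rw [map_sub]; exact hw2.symm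
      obtain ⟨y, hy⟩ := hinj (x - x') (Submodule.sub_mem _ hx hx') ⟨w, hw'⟩
      exact ⟨y, Subtype.ext hy⟩
    · intro b
      obtain ⟨⟨z, hz⟩, rfl⟩ := Submodule.mkQ_surjective _ b
      obtain ⟨x, w, hx, hxw⟩ := hsurj z hz
      refine ⟨Submodule.Quotient.mk ⟨x, hx⟩, ?_⟩
      refine (hφH _).trans ((Submodule.Quotient.eq _).mpr ?_)
      refine ⟨w, Subtype.ext ?_⟩
      show S₂.f w = _
      show S₂.f w = φ.τ₂ x - z
      rw [hxw]
      abel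
  have h1 : IsIso ((LinearEquiv.ofBijective φH.hom hbij).toModuleIso.hom) := inferInstance
  have : IsIso γ.φH := by exact h1
  infer_instance

lemma step_core {A : Type} [Ring A] {N₀ N N' Q' Q'' : ModuleCat.{v} A}
    (dM₀ : N₀ ⟶ N) (dM : N ⟶ N') (δ' : Q' ⟶ Q'') (f' : Q' ⟶ N')
    (ι₁ ι₂ : Type v) (g₁ : ι₁ → Q') (hg₁ : ∀ i, δ' (g₁ i) = 0)
    (m : ι₁ → N) (hm : ∀ i, dM (m i) = f' (g₁ i))
    (hg₁span : ∀ x : Q', δ' x = 0 → (∃ w, dM w = f' x) →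
      ∃ c : ι₁ →₀ A, (c.sum fun i a => a • g₁ i) = x)
    (g₂ : ι₂ → N) (hg₂ : ∀ i, dM (g₂ i) = 0)
    (hg₂span : ∀ z : N, dM z = 0 →
      ∃ (c : ι₂ →₀ A) (w : N₀), z = (c.sum fun i a => a • g₂ i) + dM₀ w) :
    ∃ (Q : ModuleCat A) (δ : Q ⟶ Q') (f : Q ⟶ N),
      Module.Free A Q ∧ (Finite ι₁ → Finite ι₂ → Module.Finite A Q) ∧
      δ ≫ δ' = 0 ∧ δ ≫ f' = f ≫ dM ∧
      (∀ x : Q', δ' x = 0 → (∃ w : N, dM w = f' x) → ∃ y : Q, δ y = x) ∧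
      (∀ z : N, dM z = 0 → ∃ (y : Q) (w : N₀), δ y = 0 ∧ f y = z + dM₀ w) := by
  classical
  refine ⟨ModuleCat.of A ((ι₁ →₀ A) × (ι₂ →₀ A)),
    ModuleCat.ofHom ((Finsupp.linearCombination A g₁).comp (LinearMap.fst A _ _)),
    ModuleCat.ofHom (((Finsupp.linearCombination A m).comp (LinearMap.fst A _ _)) +
      ((Finsupp.linearCombination A g₂).comp (LinearMap.snd A _ _))),
    (show Module.Free A ((ι₁ →₀ A) × (ι₂ →₀ A)) from inferInstance), ?_, ?_, ?_, ?_, ?_⟩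
  · intro h1 h2
    exact (show Module.Finite A ((ι₁ →₀ A) × (ι₂ →₀ A)) from inferInstance)
  · apply ModuleCat.hom_ext
    apply LinearMap.ext
    rintro ⟨c, b⟩
    show δ' (Finsupp.linearCombination A g₁ c) = 0
    rw [Finsupp.linearCombination_apply, map_finsuppSum]
    rw [Finsupp.sum]
    exact Finset.sum_eq_zero fun i _ => by rw [map_smul, hg₁, smul_zero]
  · apply ModuleCat.hom_ext
    apply LinearMap.ext
    rintro ⟨c, b⟩
    show f' (Finsupp.linearCombination A g₁ c) =
      dM (Finsupp.linearCombination A m c + Finsupp.linearCombination A g₂ b)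
    rw [map_add, Finsupp.linearCombination_apply, Finsupp.linearCombination_apply,
      Finsupp.linearCombination_apply, map_finsuppSum, map_finsuppSum, map_finsuppSum]
    rw [show (Finsupp.sum b fun i a => dM (a • g₂ i)) = 0 from by
      rw [Finsupp.sum]
      exact Finset.sum_eq_zero fun i _ => by rw [map_smul, hg₂, smul_zero], add_zero]
    exact Finsupp.sum_congr fun i _ => by rw [map_smul, map_smul, hm]
  · intro x hx hw
    obtain ⟨c, hc⟩ := hg₁span x hx hw
    refine ⟨(c, 0), ?_⟩
    show Finsupp.linearCombination A g₁ c = x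
    rw [Finsupp.linearCombination_apply]
    exact hc
  · intro z hz
    obtain ⟨c, w, hc⟩ := hg₂span z hz
    refine ⟨(0, c), -w, ?_, ?_⟩
    · show Finsupp.linearCombination A g₁ 0 = 0
      simp
    · show Finsupp.linearCombination A m 0 + Finsupp.linearCombination A g₂ c = z + dM₀ (-w)
      rw [map_zero, zero_add, map_neg, Finsupp.linearCombination_apply]
      rw [hc]
      abel

lemma step_ex {A : Type} [Ring A] {N₀ N N' Q' Q'' : ModuleCat.{v} A}
    (dM₀ : N₀ ⟶ N) (dM : N ⟶ N') (hdd : dM₀ ≫ dM = 0) (δ' : Q' ⟶ Q'') (f' : Q' ⟶ N') :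
    ∃ (Q : ModuleCat.{v} A) (δ : Q ⟶ Q') (f : Q ⟶ N),
      Module.Free A Q ∧
      (IsNoetherianRing A → Module.Finite A Q' →
        Module.Finite A (ShortComplex.mk dM₀ dM hdd).moduleCatLeftHomologyData.H → Module.Finite A Q) ∧
      δ ≫ δ' = 0 ∧ δ ≫ f' = f ≫ dM ∧
      (∀ x : Q', δ' x = 0 → (∃ w : N, dM w = f' x) → ∃ y : Q, δ y = x) ∧
      (∀ z : N, dM z = 0 → ∃ (y : Q) (w : N₀), δ y = 0 ∧ f y = z + dM₀ w) := by
  classical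
  set S : ShortComplex (ModuleCat A) := ShortComplex.mk dM₀ dM hdd with hS
  by_cases h : IsNoetherianRing A ∧ Module.Finite A Q' ∧ Module.Finite A S.moduleCatLeftHomologyData.H
  · obtain ⟨hnoe, hQ', hH⟩ := h
    have hNoeQ' : IsNoetherian A Q' := isNoetherian_of_isNoetherianRing_of_finite A Q'
    set K : Submodule A Q' := LinearMap.ker δ'.hom ⊓ Submodule.comap f'.hom (LinearMap.range dM.hom) with hKdef
    obtain ⟨s, hs⟩ := IsNoetherian.noetherian K
    have hsK : ∀ x ∈ s, x ∈ K := fun x hx => hs ▸ Submodule.subset_span hx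
    obtain ⟨t, ht⟩ := hH.fg_top
    have hpre : ∀ i : (↑t : Set S.moduleCatLeftHomologyData.H), ∃ q : LinearMap.ker dM.hom,
        Submodule.Quotient.mk (p := LinearMap.range S.moduleCatToCycles) q =
          (i : S.moduleCatLeftHomologyData.H) := fun i =>
      Submodule.mkQ_surjective _ _
    choose pre hpre' using hpre
    obtain ⟨Q, δ, f, hfree, hfin, h1, h2, h3, h4⟩ := step_core dM₀ dM δ' f'
      (↑s : Set Q') (↑t : Set S.moduleCatLeftHomologyData.H) (fun i => (i : Q'))
      (fun i => (hsK i i.2).1)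
      (fun i => ((hsK i i.2).2 : f' (i : Q') ∈ LinearMap.range dM.hom).choose)
      (fun i => ((hsK i i.2).2 : f' (i : Q') ∈ LinearMap.range dM.hom).choose_spec)
      (by
        intro x hx hw
        have hxK : x ∈ K :=
          ⟨hx, show f' x ∈ LinearMap.range dM.hom from ⟨hw.choose, hw.choose_spec⟩⟩
        rw [← hs, ← Subtype.range_coe (s := (↑s : Set Q'))] at hxK
        exact Finsupp.mem_span_range_iff_exists_finsupp.mp hxK)
      (fun i => ((pre i : LinearMap.ker dM.hom) : N))
      (fun i => (pre i).2)
      (by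
        intro z hz
        have hzt : Submodule.Quotient.mk (p := LinearMap.range S.moduleCatToCycles)
            (⟨z, hz⟩ : LinearMap.ker dM.hom) ∈
            Submodule.span A (↑t : Set S.moduleCatLeftHomologyData.H) := by rw [ht]; exact Submodule.mem_top (M := S.moduleCatLeftHomologyData.H)
        rw [← Subtype.range_coe (s := (↑t : Set S.moduleCatLeftHomologyData.H))] at hzt
        obtain ⟨c, hc⟩ :=
          (Finsupp.mem_span_range_iff_exists_finsupp (M := S.moduleCatLeftHomologyData.H)).mp hzt
        have hc' : Submodule.Quotient.mk (p := LinearMap.range S.moduleCatToCycles)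
            (c.sum fun i a => a • pre i) =
            Submodule.Quotient.mk (p := LinearMap.range S.moduleCatToCycles)
            (⟨z, hz⟩ : LinearMap.ker dM.hom) := by
          rw [← hc, ← Submodule.mkQ_apply, map_finsuppSum]
          exact Finsupp.sum_congr fun i _ => by
            rw [map_smul, Submodule.mkQ_apply, hpre' i]; rfl
        rw [Submodule.Quotient.eq] at hc'
        obtain ⟨w, hw⟩ := hc'
        refine ⟨c, -w, ?_⟩
        have := congrArg Subtype.val hw
        simp only [AddSubgroupClass.coe_sub] at this
        have h5 : dM₀ w = (((c.sum fun i a => a • pre i) : LinearMap.ker dM.hom) : N) - z := this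
        have h6 : (((c.sum fun i a => a • pre i) : LinearMap.ker dM.hom) : N)
            = c.sum fun i a => a • ((pre i : LinearMap.ker dM.hom) : N) := by
          rw [show (((c.sum fun i a => a • pre i) : LinearMap.ker dM.hom) : N)
            = (LinearMap.ker dM.hom).subtype (c.sum fun i a => a • pre i) from rfl, map_finsuppSum]
          exact Finsupp.sum_congr fun i _ => by rw [map_smul]; rfl
        rw [map_neg, h5, h6]
        abel)
    refine ⟨Q, δ, f, hfree, fun _ _ _ => hfin ?_ ?_, h1, h2, h3, h4⟩
    · exact Set.Finite.to_subtype s.finite_toSet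
    · exact Set.Finite.to_subtype t.finite_toSet
  · obtain ⟨Q, δ, f, hfree, hfin, h1, h2, h3, h4⟩ := step_core dM₀ dM δ' f'
      {x : Q' // δ' x = 0 ∧ ∃ w, dM w = f' x} {z : N // dM z = 0}
      (fun i => (i : Q')) (fun i => i.2.1) (fun i => i.2.2.choose) (fun i => i.2.2.choose_spec)
      (fun x hx hw => ⟨Finsupp.single ⟨x, hx, hw⟩ 1, by
        rw [Finsupp.sum_single_index] <;> simp⟩)
      (fun i => (i : N)) (fun i => i.2)
      (fun z hz => ⟨Finsupp.single ⟨z, hz⟩ 1, 0, by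
        rw [Finsupp.sum_single_index] <;> simp⟩)
    exact ⟨Q, δ, f, hfree, fun h1' h2' h3' => absurd ⟨h1', h2', h3'⟩ h, h1, h2, h3, h4⟩

section
variable {A : Type} [Ring A] (M : CochainComplex (ModuleCat.{v} A) ℤ) (n₁ : ℤ)

lemma fin_transfer (a b c : ℤ) (hab : a + 1 = b) (hbc : b + 1 = c)
    [hfin : Module.Finite A (M.homology b)] :
    Module.Finite A
      (ShortComplex.mk (M.d a b) (M.d b c) (M.d_comp_d a b c)).moduleCatLeftHomologyData.H := by
  have hi : (ComplexShape.up ℤ).prev b = a := (ComplexShape.up ℤ).prev_eq' hab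
  have hk : (ComplexShape.up ℤ).next b = c := (ComplexShape.up ℤ).next_eq' hbc
  have e1 : M.homology b ≅ (M.sc' a b c).homology := M.homologyIsoSc' a b c hi hk
  have e2 : (M.sc' a b c).homology ≅ (M.sc' a b c).moduleCatLeftHomologyData.H :=
    (M.sc' a b c).moduleCatHomologyIso
  exact Module.Finite.equiv (e1 ≪≫ e2).toLinearEquiv

structure Tw (k : ℕ) where
  Q : ModuleCat.{v} A
  Qp : ModuleCat.{v} A
  δ : Q ⟶ Qp
  f : Q ⟶ M.X (n₁ + 1 - k)

noncomputable def T : ∀ k : ℕ, Tw M n₁ k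
  | 0 => ⟨ModuleCat.of A PUnit.{v+1}, ModuleCat.of A PUnit.{v+1}, 0, 0⟩
  | (k+1) =>
    let e := step_ex (M.d (n₁ + 1 - ((k+2 : ℕ) : ℤ)) (n₁ + 1 - ((k+1 : ℕ) : ℤ)))
      (M.d (n₁ + 1 - ((k+1 : ℕ) : ℤ)) (n₁ + 1 - ((k : ℕ) : ℤ))) (M.d_comp_d _ _ _)
      (T k).δ (T k).f
    ⟨e.choose, (T k).Q, e.choose_spec.choose, e.choose_spec.choose_spec.choose⟩

lemma T_spec (k : ℕ) :
    Module.Free A ((T M n₁ (k+1)).Q) ∧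
    (IsNoetherianRing A → Module.Finite A ((T M n₁ k).Q) →
      Module.Finite A (ShortComplex.mk (M.d (n₁ + 1 - ((k+2 : ℕ) : ℤ)) (n₁ + 1 - ((k+1 : ℕ) : ℤ)))
        (M.d (n₁ + 1 - ((k+1 : ℕ) : ℤ)) (n₁ + 1 - ((k : ℕ) : ℤ)))
        (M.d_comp_d _ _ _)).moduleCatLeftHomologyData.H →
      Module.Finite A ((T M n₁ (k+1)).Q)) ∧
    (T M n₁ (k+1)).δ ≫ (T M n₁ k).δ = 0 ∧
    (T M n₁ (k+1)).δ ≫ (T M n₁ k).f =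
      (T M n₁ (k+1)).f ≫ M.d (n₁ + 1 - ((k+1 : ℕ) : ℤ)) (n₁ + 1 - ((k : ℕ) : ℤ)) ∧
    (∀ x : (T M n₁ k).Q, (T M n₁ k).δ x = 0 →
      (∃ w, M.d (n₁ + 1 - ((k+1 : ℕ) : ℤ)) (n₁ + 1 - ((k : ℕ) : ℤ)) w = (T M n₁ k).f x) →
      ∃ y, (T M n₁ (k+1)).δ y = x) ∧
    (∀ z : M.X (n₁ + 1 - ((k+1 : ℕ) : ℤ)),
      M.d (n₁ + 1 - ((k+1 : ℕ) : ℤ)) (n₁ + 1 - ((k : ℕ) : ℤ)) z = 0 →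
      ∃ y w, (T M n₁ (k+1)).δ y = 0 ∧
        (T M n₁ (k+1)).f y = z + M.d (n₁ + 1 - ((k+2 : ℕ) : ℤ)) (n₁ + 1 - ((k+1 : ℕ) : ℤ)) w) :=
  (step_ex (M.d (n₁ + 1 - ((k+2 : ℕ) : ℤ)) (n₁ + 1 - ((k+1 : ℕ) : ℤ)))
      (M.d (n₁ + 1 - ((k+1 : ℕ) : ℤ)) (n₁ + 1 - ((k : ℕ) : ℤ))) (M.d_comp_d _ _ _)
      (T M n₁ k).δ (T M n₁ k).f).choose_spec.choose_spec.choose_spec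

lemma TQ_free : ∀ k : ℕ, Module.Free A ((T M n₁ k).Q)
  | 0 => show Module.Free A PUnit.{v+1} from inferInstance
  | (k+1) => (T_spec M n₁ k).1

lemma TQ_fin (hno : IsNoetherianRing A) (hfg : ∀ i : ℤ, Module.Finite A (M.homology i)) :
    ∀ k : ℕ, Module.Finite A ((T M n₁ k).Q)
  | 0 => show Module.Finite A PUnit.{v+1} from inferInstance
  | (k+1) => by
    haveI := hfg (n₁ + 1 - ((k+1 : ℕ) : ℤ))
    exact (T_spec M n₁ k).2.1 hno (TQ_fin hno hfg k)
      (fin_transfer M _ _ _ (by push_cast; ring) (by push_cast; ring))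
end
section
variable {A : Type} [Ring A] (M : CochainComplex (ModuleCat.{v} A) ℤ) (n₁ : ℤ)

lemma d_eqToHom (a b b' : ℤ) (h : b = b') :
    M.d a b ≫ eqToHom (congrArg M.X h) = M.d a b' := by subst h; simp

noncomputable def PX (n : ℤ) : ModuleCat.{v} A := (T M n₁ ((n₁ + 1 - n).toNat)).Q

noncomputable def PD (n m : ℤ) : PX M n₁ n ⟶ PX M n₁ m :=
  if h : n + 1 = m ∧ n ≤ n₁ then
    eqToHom (congrArg (fun k => (T M n₁ k).Q)
      (show (n₁ + 1 - n).toNat = (n₁ + 1 - m).toNat + 1 by omega)) ≫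
      (T M n₁ ((n₁ + 1 - m).toNat + 1)).δ
  else 0

lemma PX_isZero (n : ℤ) (hn : n₁ < n) : IsZero (PX M n₁ n) := by
  unfold PX
  rw [show (n₁ + 1 - n).toNat = 0 by omega]
  haveI : Subsingleton ((T M n₁ 0).Q) := inferInstanceAs (Subsingleton PUnit.{v+1})
  exact ModuleCat.isZero_of_subsingleton _

lemma Dcomp_gen (a b c : ℕ) (p₁ : a = b + 1) (p₂ : b = c + 1) :
    (eqToHom (congrArg (fun k => (T M n₁ k).Q) p₁) ≫ (T M n₁ (b + 1)).δ) ≫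
      eqToHom (congrArg (fun k => (T M n₁ k).Q) p₂) ≫ (T M n₁ (c + 1)).δ = 0 := by
  subst p₂; subst p₁
  simp only [eqToHom_refl, Category.id_comp]
  exact (T_spec M n₁ (c + 1)).2.2.1

noncomputable def PC : CochainComplex (ModuleCat.{v} A) ℤ where
  X := PX M n₁
  d := PD M n₁
  shape i j hij := dif_neg (fun hc => hij hc.1)
  d_comp_d' i j l hij hjl := by
    replace hij : i + 1 = j := hij
    replace hjl : j + 1 = l := hjl
    by_cases hi : i ≤ n₁
    · by_cases hj : j ≤ n₁
      · unfold PD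
        rw [dif_pos ⟨hij, hi⟩, dif_pos ⟨hjl, hj⟩]
        refine Dcomp_gen M n₁ _ _ _ ?_ ?_ <;> omega
      · unfold PD
        rw [dif_neg (fun hc : j + 1 = l ∧ j ≤ n₁ => hj hc.2)]
        exact Limits.comp_zero
    · unfold PD
      rw [dif_neg (fun hc : i + 1 = j ∧ i ≤ n₁ => hi hc.2)]
      exact Limits.zero_comp

noncomputable def PhiF (n : ℤ) : PX M n₁ n ⟶ M.X n :=
  if h : n ≤ n₁ + 1 then
    (T M n₁ ((n₁ + 1 - n).toNat)).f ≫
      eqToHom (congrArg M.X (show n₁ + 1 - (((n₁ + 1 - n).toNat : ℕ) : ℤ) = n by omega))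
  else 0

lemma Comm_gen (a b : ℕ) (i j : ℤ) (p₁ : a = b + 1) (hij : i + 1 = j)
    (q₁ : n₁ + 1 - ((a : ℕ) : ℤ) = i) (q₂ : n₁ + 1 - ((b : ℕ) : ℤ) = j) :
    ((T M n₁ a).f ≫ eqToHom (congrArg M.X q₁)) ≫ M.d i j =
      (eqToHom (congrArg (fun k => (T M n₁ k).Q) p₁) ≫ (T M n₁ (b + 1)).δ) ≫
        (T M n₁ b).f ≫ eqToHom (congrArg M.X q₂) := by
  subst p₁; subst hij; subst q₁
  simp only [eqToHom_refl, Category.id_comp, Category.comp_id]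
  have hcomm := (T_spec M n₁ b).2.2.2.1
  exact (congrArg (fun g => (T M n₁ (b + 1)).f ≫ g) (d_eqToHom M _ _ _ q₂).symm).trans
    ((Category.assoc _ _ _).symm.trans
      ((congrArg (fun g => g ≫ eqToHom (congrArg M.X q₂)) hcomm.symm).trans (Category.assoc _ _ _)))

noncomputable def Phi (hb : ∀ n > n₁, IsZero (M.X n)) : PC M n₁ ⟶ M where
  f := PhiF M n₁
  comm' i j hij := by
    replace hij : i + 1 = j := hij
    by_cases hi : i ≤ n₁
    · show PhiF M n₁ _ ≫ M.d _ _ = PD M n₁ _ _ ≫ PhiF M n₁ _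
      unfold PhiF PD
      rw [dif_pos (by omega : i ≤ n₁ + 1), dif_pos (by omega : j ≤ n₁ + 1),
        dif_pos ⟨hij, hi⟩]
      refine Comm_gen M n₁ _ _ _ _ ?_ hij ?_ ?_ <;> omega
    · exact (hb j (by omega)).eq_of_tgt _ _

lemma Inj_gen (s r t : ℕ) (i i' : ℤ) (p : r = s + 1) (p' : t = r + 1)
    (q : n₁ + 1 - ((r : ℕ) : ℤ) = i) (q' : n₁ + 1 - ((t : ℕ) : ℤ) = i') :
    ∀ x : (T M n₁ r).Q,
      (eqToHom (congrArg (fun k => (T M n₁ k).Q) p) ≫ (T M n₁ (s + 1)).δ) x = 0 →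
      (∃ w, ((T M n₁ r).f ≫ eqToHom (congrArg M.X q)) x = M.d i' i w) →
      ∃ y : (T M n₁ t).Q,
        (eqToHom (congrArg (fun k => (T M n₁ k).Q) p') ≫ (T M n₁ (r + 1)).δ) y = x := by
  subst p; subst p'; subst q; subst q'
  simp only [eqToHom_refl, Category.id_comp, Category.comp_id]
  intro x hx hw
  obtain ⟨w, hw⟩ := hw
  exact (T_spec M n₁ (s + 1)).2.2.2.2.1 x hx ⟨w, hw.symm⟩

lemma Surj_gen (s r t : ℕ) (i i' i'' : ℤ) (p : r = s + 1) (p' : t = r + 1)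
    (q : n₁ + 1 - ((r : ℕ) : ℤ) = i) (q' : n₁ + 1 - ((t : ℕ) : ℤ) = i')
    (q'' : n₁ + 1 - ((s : ℕ) : ℤ) = i'') :
    ∀ z : M.X i, M.d i i'' z = 0 →
      ∃ (x : (T M n₁ r).Q) (w : M.X i'),
        (eqToHom (congrArg (fun k => (T M n₁ k).Q) p) ≫ (T M n₁ (s + 1)).δ) x = 0 ∧
        ((T M n₁ r).f ≫ eqToHom (congrArg M.X q)) x = z + M.d i' i w := by
  subst p; subst p'; subst q; subst q'; subst q''
  simp only [eqToHom_refl, Category.id_comp, Category.comp_id]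
  intro z hz
  obtain ⟨y, w, hy, hyw⟩ := (T_spec M n₁ s).2.2.2.2.2 z hz
  exact ⟨y, w, hy, hyw⟩

lemma Phi_quasiAt (hb : ∀ n > n₁, IsZero (M.X n)) (j : ℤ) (hj : j ≤ n₁) :
    QuasiIsoAt (Phi M n₁ hb) j := by
  rw [quasiIsoAt_iff' _ (j - 1) j (j + 1)
    ((ComplexShape.up ℤ).prev_eq' (show j - 1 + 1 = j by ring))
    ((ComplexShape.up ℤ).next_eq' rfl)]
  apply moduleCat_quasiIso
  · show ∀ x : PX M n₁ j, PD M n₁ j (j + 1) x = 0 →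
      (∃ w, PhiF M n₁ j x = M.d (j - 1) j w) → ∃ y, PD M n₁ (j - 1) j y = x
    unfold PX PD PhiF
    rw [dif_pos (⟨rfl, hj⟩ : j + 1 = j + 1 ∧ j ≤ n₁),
      dif_pos (⟨by ring, by omega⟩ : j - 1 + 1 = j ∧ j - 1 ≤ n₁),
      dif_pos (by omega : j ≤ n₁ + 1)]
    refine Inj_gen M n₁ ((n₁ + 1 - (j + 1)).toNat) ((n₁ + 1 - j).toNat)
      ((n₁ + 1 - (j - 1)).toNat) j (j - 1) ?_ ?_ ?_ ?_ <;> omega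
  · show ∀ z : M.X j, M.d j (j + 1) z = 0 →
      ∃ (x : PX M n₁ j) (w : M.X (j - 1)),
        PD M n₁ j (j + 1) x = 0 ∧ PhiF M n₁ j x = z + M.d (j - 1) j w
    unfold PX PD PhiF
    rw [dif_pos (⟨rfl, hj⟩ : j + 1 = j + 1 ∧ j ≤ n₁),
      dif_pos (by omega : j ≤ n₁ + 1)]
    refine Surj_gen M n₁ ((n₁ + 1 - (j + 1)).toNat) ((n₁ + 1 - j).toNat)
      ((n₁ + 1 - (j - 1)).toNat) j (j - 1) (j + 1) ?_ ?_ ?_ ?_ ?_ <;> omega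

lemma Phi_quasi (hb : ∀ n > n₁, IsZero (M.X n)) : QuasiIso (Phi M n₁ hb) := by
  refine ⟨fun i => ?_⟩
  by_cases hi : i ≤ n₁
  · exact Phi_quasiAt M n₁ hb i hi
  · have h1 : (PC M n₁).ExactAt i := by
      rw [HomologicalComplex.exactAt_iff]
      exact ShortComplex.exact_of_isZero_X₂ _ (PX_isZero M n₁ i (by omega))
    have h2 : M.ExactAt i := by
      rw [HomologicalComplex.exactAt_iff]
      exact ShortComplex.exact_of_isZero_X₂ _ (hb i (by omega))
    rw [quasiIsoAt_iff_exactAt _ _ h1]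
    exact h2
end

/-!
Every bounded above cochain complex `M` of left modules over a ring `A` admits a
quasi-isomorphism `P ⟶ M` from a bounded above complex `P` of free `A`-modules.
If moreover `A` is left noetherian and all the cohomology modules `H^i(M)` are finitely
generated, then `P` can be chosen with each `P^i` a finitely generated free module.
-/
theorem stmt_14 (A : Type) [Ring A] (M : CochainComplex (ModuleCat A) ℤ)
    (hbdd : ∃ n₁ : ℤ, ∀ n > n₁, IsZero (M.X n)) :
    (∃ (P : CochainComplex (ModuleCat A) ℤ) (f : P ⟶ M),
      (∃ n₁ : ℤ, ∀ n > n₁, IsZero (P.X n)) ∧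
      (∀ n : ℤ, Module.Free A (P.X n)) ∧
      QuasiIso f) ∧
    (IsNoetherianRing A → (∀ i : ℤ, Module.Finite A (M.homology i)) →
      ∃ (P : CochainComplex (ModuleCat A) ℤ) (f : P ⟶ M),
        (∃ n₁ : ℤ, ∀ n > n₁, IsZero (P.X n)) ∧
        (∀ n : ℤ, Module.Free A (P.X n) ∧ Module.Finite A (P.X n)) ∧
        QuasiIso f) := by
  obtain ⟨n₁, hb⟩ := hbdd
  constructor
  · exact ⟨PC M n₁, Phi M n₁ hb, ⟨n₁, fun n hn => PX_isZero M n₁ n hn⟩,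
      fun n => TQ_free M n₁ _, Phi_quasi M n₁ hb⟩
  · intro hno hfg
    exact ⟨PC M n₁, Phi M n₁ hb, ⟨n₁, fun n hn => PX_isZero M n₁ n hn⟩,
      fun n => ⟨TQ_free M n₁ _, TQ_fin M n₁ hno hfg _⟩, Phi_quasi M n₁ hb⟩
end
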